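/- Let F : C → D and G : D → C be exact functors between triangulated categories with F ⊣ G such that the unit η : Id_C → GF admits a natural retraction. Then a triangle X → Y → Z → X[1] in C is distinguished if and only if its image FX → FY → FZ → FX[1] is distinguished in D. -/

import Mathlib

open CategoryTheory Limits Pretriangulated

/-- If `F ⊣ G` are exact functors between idempotent-complete triangulated categories and the
unit admits a natural retraction, then a triangle in `C` is distinguished if and only if its
image under `F` is distinguished in `D`. -/
theorem distinguished_iff_image_distinguished
    {C D : Type*} [Category C] [Category D]
    [HasZeroObject C] [HasZeroObject D] [Preadditive C] [Preadditive D]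
    [HasShift C ℤ] [HasShift D ℤ]
    [∀ n : ℤ, (shiftFunctor C n).Additive] [∀ n : ℤ, (shiftFunctor D n).Additive]
    [Pretriangulated C] [Pretriangulated D]
    [IsIdempotentComplete C] [IsIdempotentComplete D]
    (F : C ⥤ D) (G : D ⥤ C) [F.CommShift ℤ] [G.CommShift ℤ]
    [F.IsTriangulated] [G.IsTriangulated]
    (adj : F ⊣ G)
    (σ : F ⋙ G ⟶ 𝟭 C) (hσ : adj.unit ≫ σ = 𝟙 (𝟭 C)) :
    ∀ T : Triangle C, (T ∈ distTriang C) ↔ (F.mapTriangle.obj T ∈ distTriang D) := by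
  have hretr : ∀ A : C, adj.unit.app A ≫ σ.app A = 𝟙 A := fun A => by
    simpa using NatTrans.congr_app hσ A
  have lemL : ∀ {A A' B : C} (a : A ⟶ A') (δ : F.obj A' ⟶ F.obj B),
      a ≫ adj.unit.app A' ≫ G.map δ ≫ σ.app B =
        adj.unit.app A ≫ G.map (F.map a ≫ δ) ≫ σ.app B := by
    intro A A' B a δ
    have h := adj.unit.naturality a
    dsimp at h
    rw [← Category.assoc a, h, G.map_comp]
    simp only [Category.assoc]
  have lemR : ∀ {A B B' : C} (δ : F.obj A ⟶ F.obj B) (b : B ⟶ B'),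
      adj.unit.app A ≫ G.map δ ≫ σ.app B ≫ b =
        adj.unit.app A ≫ G.map (δ ≫ F.map b) ≫ σ.app B' := by
    intro A B B' δ b
    have h := σ.naturality b
    dsimp at h
    rw [G.map_comp]
    simp only [Category.assoc]
    rw [← h]
  have key : ∀ {A B : C} (f : A ⟶ B),
      adj.unit.app A ≫ G.map (F.map f) ≫ σ.app B = f := by
    intro A B f
    have h := adj.unit.naturality f
    dsimp at h
    rw [← Category.assoc, ← h, Category.assoc, hretr, Category.comp_id]
  have hfaith : ∀ {A B : C} (f g : A ⟶ B), F.map f = F.map g → f = g := by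
    intro A B f g h
    rw [← key f, ← key g, h]
  intro T
  constructor
  · exact fun hT => F.map_distinguished T hT
  · intro hFT
    obtain ⟨Z', g', h', hT'⟩ := distinguished_cocone_triangle T.mor₁
    have hFT' := F.map_distinguished _ hT'
    obtain ⟨β, hβ₁, hβ₃⟩ : ∃ β : F.obj Z' ⟶ F.obj T.obj₃,
        F.map g' ≫ β = F.map T.mor₂ ∧ β ≫ F.map T.mor₃ = F.map h' := by
      obtain ⟨β, h1, h2⟩ := complete_distinguished_triangle_morphism
        (F.mapTriangle.obj (Triangle.mk T.mor₁ g' h')) (F.mapTriangle.obj T)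
        hFT' hFT (𝟙 _) (𝟙 _) (by change F.map T.mor₁ ≫ 𝟙 _ = 𝟙 _ ≫ F.map T.mor₁; rw [Category.comp_id, Category.id_comp])
      change F.obj Z' ⟶ F.obj T.obj₃ at β
      change F.map g' ≫ β = 𝟙 _ ≫ F.map T.mor₂ at h1
      change (F.map h' ≫ (F.commShiftIso (1 : ℤ)).hom.app T.obj₁) ≫ (shiftFunctor D (1 : ℤ)).map (𝟙 (F.obj T.obj₁)) = β ≫ F.map T.mor₃ ≫ (F.commShiftIso (1 : ℤ)).hom.app T.obj₁ at h2
      rw [Category.id_comp] at h1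
      erw [CategoryTheory.Functor.map_id, Category.comp_id] at h2
      refine ⟨β, h1, ?_⟩
      have h3 : F.map h' ≫ (F.commShiftIso (1 : ℤ)).hom.app T.obj₁ =
          (β ≫ F.map T.mor₃) ≫ (F.commShiftIso (1 : ℤ)).hom.app T.obj₁ := by
        simpa only [Category.assoc] using h2
      exact ((cancel_mono _).1 h3).symm
    -- β is an isomorphism
    have hβiso : IsIso β := by
      refine isIso₃_of_isIso₁₂ (Triangle.homMk (F.mapTriangle.obj (Triangle.mk T.mor₁ g' h'))
        (F.mapTriangle.obj T) (𝟙 _) (𝟙 _) β ?_ ?_ ?_) hFT' hFT ?_ ?_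
      · change F.map T.mor₁ ≫ 𝟙 _ = 𝟙 _ ≫ F.map T.mor₁; rw [Category.comp_id, Category.id_comp]
      · change F.map g' ≫ β = 𝟙 _ ≫ F.map T.mor₂; rw [Category.id_comp]; exact hβ₁
      · change (F.map h' ≫ (F.commShiftIso (1 : ℤ)).hom.app T.obj₁) ≫ (shiftFunctor D (1 : ℤ)).map (𝟙 (F.obj T.obj₁)) = β ≫ F.map T.mor₃ ≫ (F.commShiftIso (1 : ℤ)).hom.app T.obj₁
        erw [CategoryTheory.Functor.map_id, Category.comp_id, ← hβ₃]
        simp only [Category.assoc]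
      · change IsIso (𝟙 (F.obj T.obj₁)); infer_instance
      · change IsIso (𝟙 (F.obj T.obj₂)); infer_instance
    set φ₃ : Z' ⟶ T.obj₃ := adj.unit.app Z' ≫ G.map β ≫ σ.app T.obj₃ with hφ₃def
    set χ₃ : T.obj₃ ⟶ Z' := adj.unit.app T.obj₃ ≫ G.map (inv β) ≫ σ.app Z' with hχ₃def
    have hb : g' ≫ φ₃ = T.mor₂ := by
      rw [hφ₃def, lemL, hβ₁, key]
    have hc : φ₃ ≫ T.mor₃ = h' := by
      rw [hφ₃def]
      simp only [Category.assoc]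
      rw [lemR β T.mor₃, hβ₃, key]
    have hb' : T.mor₂ ≫ χ₃ = g' := by
      rw [hχ₃def, lemL]
      have h5 : F.map T.mor₂ ≫ inv β = F.map g' := by
        rw [← hβ₁, Category.assoc, IsIso.hom_inv_id, Category.comp_id]
      rw [h5, key]
    have hc' : χ₃ ≫ h' = T.mor₃ := by
      rw [hχ₃def]
      simp only [Category.assoc]
      rw [lemR (inv β) h']
      have h4 : inv β ≫ F.map h' = F.map T.mor₃ := by
        rw [← hβ₃, IsIso.inv_hom_id_assoc]
      rw [h4, key]
    set e : Z' ⟶ Z' := φ₃ ≫ χ₃ with hedef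
    have heg : g' ≫ e = g' := by rw [hedef, ← Category.assoc, hb, hb']
    have heh : e ≫ h' = h' := by rw [hedef, Category.assoc, hc', hc]
    have hg0 : g' ≫ (e - 𝟙 Z') = 0 := by
      rw [Preadditive.comp_sub, heg, Category.comp_id, sub_self]
    obtain ⟨m, hm⟩ := Triangle.coyoneda_exact₃ _ hT' (e - 𝟙 Z')
      (by change (e - 𝟙 Z') ≫ h' = 0; rw [Preadditive.sub_comp, heh, Category.id_comp, sub_self])
    have hn2 : (e - 𝟙 Z') ≫ (e - 𝟙 Z') = 0 := by
      nth_rewrite 1 [hm]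
      change (m ≫ g') ≫ (e - 𝟙 Z') = 0
      erw [Category.assoc, hg0, comp_zero]
    have hee : e ≫ e = e + e - 𝟙 Z' := by
      rw [← sub_eq_zero, ← hn2]
      simp only [Preadditive.sub_comp, Preadditive.comp_sub, Category.comp_id,
        Category.id_comp]
      abel
    have heiso : IsIso e := by
      refine ⟨𝟙 Z' - (e - 𝟙 Z'), ?_, ?_⟩ <;>
      · simp only [Preadditive.comp_sub, Preadditive.sub_comp, Category.comp_id,
          Category.id_comp, hee]
        abel
    have hsplit : φ₃ ≫ (χ₃ ≫ inv e) = 𝟙 Z' := by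
      rw [← Category.assoc, ← hedef, IsIso.hom_inv_id]
    -- the triangle morphism from the cone triangle to `T`
    let hφ : Triangle.mk T.mor₁ g' h' ⟶ T :=
      Triangle.homMk _ _ (𝟙 T.obj₁) (𝟙 T.obj₂) φ₃
        (by change T.mor₁ ≫ 𝟙 _ = 𝟙 _ ≫ T.mor₁; rw [Category.comp_id, Category.id_comp])
        (by change g' ≫ φ₃ = 𝟙 _ ≫ T.mor₂; rw [Category.id_comp]; exact hb)
        (by change h' ≫ (shiftFunctor C (1 : ℤ)).map (𝟙 T.obj₁) = φ₃ ≫ T.mor₃; rw [CategoryTheory.Functor.map_id, Category.comp_id, hc])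
    have hFφ₃ : IsIso (F.map φ₃) := by
      have h1 : IsIso (F.mapTriangle.map hφ).hom₁ := by
        change IsIso (F.map (𝟙 T.obj₁)); rw [CategoryTheory.Functor.map_id]; infer_instance
      have h2 : IsIso (F.mapTriangle.map hφ).hom₂ := by
        change IsIso (F.map (𝟙 T.obj₂)); rw [CategoryTheory.Functor.map_id]; infer_instance
      exact isIso₃_of_isIso₁₂ (F.mapTriangle.map hφ) hFT' hFT h1 h2
    have hrφ : (χ₃ ≫ inv e) ≫ φ₃ = 𝟙 T.obj₃ := by
      apply hfaith
      rw [F.map_comp, F.map_id]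
      have h5 : F.map φ₃ ≫ F.map (χ₃ ≫ inv e) = 𝟙 _ := by
        rw [← F.map_comp, hsplit, F.map_id]
      rw [← IsIso.inv_eq_of_hom_inv_id h5, IsIso.inv_hom_id]
    have hφ₃iso : IsIso φ₃ := ⟨χ₃ ≫ inv e, hsplit, hrφ⟩
    have : IsIso hφ := by
      apply Triangle.isIso_of_isIsos
      · change IsIso (𝟙 T.obj₁); infer_instance
      · change IsIso (𝟙 T.obj₂); infer_instance
      · dsimp [hφ]; exact hφ₃iso
    exact isomorphic_distinguished _ hT' _ (asIso hφ).symm
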